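/- Let k be an even natural number with k ≥ 6, let ε be a real number with 0 < ε ≤ 1, let x, w, y, v be nonnegative real numbers, and let a : ℕ → ℝ be a function with a(j) ≥ 0 for all j. Write S₀ = Σ_{j=2}^{k/2} a(2j), S₁ = Σ_{j=2}^{k/2} (4j² - 8j + 7)·a(2j), and S₂ = Σ_{j=2}^{k/2} (2j - 3)·a(2j) (sums over integers j with 2 ≤ j ≤ k/2). If S₁ ≥ (4k - 12)/ε - (k - 1) and 2(x + w) + y + (k - 4)·v ≤ 1 + S₂, then (k-1)(x+w) + (k/2 + 2)·v + 2y + 2·S₀ > 0 and (k·(x+w) + (k/2 + 3)·v + 3y + 3·S₀) / ((k-1)·(x+w) + (k/2 + 2)·v + 2y + 2·S₀) ≥ (k² - 3k + 6 - ε/2) / (k² - 4k + 7). -/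

import Mathlib

set_option maxHeartbeats 1000000

theorem stmt_17 (k : ℕ) (hke : Even k) (hk : 6 ≤ k) (ε : ℝ) (hε0 : 0 < ε)
    (hε1 : ε ≤ 1) (x w y v : ℝ) (hx : 0 ≤ x) (hw : 0 ≤ w) (hy : 0 ≤ y)
    (hv : 0 ≤ v) (a : ℕ → ℝ) (ha : ∀ j, 0 ≤ a j)
    (h1 : ∑ j ∈ Finset.Icc 2 (k / 2), (4 * (j : ℝ) ^ 2 - 8 * (j : ℝ) + 7) * a (2 * j) ≥
      (4 * (k : ℝ) - 12) / ε - ((k : ℝ) - 1))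
    (h2 : 2 * (x + w) + y + ((k : ℝ) - 4) * v ≤
      1 + ∑ j ∈ Finset.Icc 2 (k / 2), (2 * (j : ℝ) - 3) * a (2 * j)) :
    ((k : ℝ) - 1) * (x + w) + ((k : ℝ) / 2 + 2) * v + 2 * y +
        2 * ∑ j ∈ Finset.Icc 2 (k / 2), a (2 * j) > 0 ∧
      ((k : ℝ) * (x + w) + ((k : ℝ) / 2 + 3) * v + 3 * y +
            3 * ∑ j ∈ Finset.Icc 2 (k / 2), a (2 * j)) /
          (((k : ℝ) - 1) * (x + w) + ((k : ℝ) / 2 + 2) * v + 2 * y +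
            2 * ∑ j ∈ Finset.Icc 2 (k / 2), a (2 * j)) ≥
        ((k : ℝ) ^ 2 - 3 * (k : ℝ) + 6 - ε / 2) /
          ((k : ℝ) ^ 2 - 4 * (k : ℝ) + 7) := by
  have hK : (6:ℝ) ≤ (k:ℝ) := by exact_mod_cast hk
  set K : ℝ := (k:ℝ) with hKdef
  set S0 := ∑ j ∈ Finset.Icc 2 (k / 2), a (2 * j) with hS0def
  set S1 := ∑ j ∈ Finset.Icc 2 (k / 2), (4 * (j : ℝ) ^ 2 - 8 * (j : ℝ) + 7) * a (2 * j) with hS1def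
  set S2 := ∑ j ∈ Finset.Icc 2 (k / 2), (2 * (j : ℝ) - 3) * a (2 * j) with hS2def
  -- bounds on indices
  have hjfacts : ∀ j ∈ Finset.Icc 2 (k / 2), (2:ℝ) ≤ (j:ℝ) ∧ 2 * (j:ℝ) ≤ K := by
    intro j hj
    rw [Finset.mem_Icc] at hj
    constructor
    · exact_mod_cast hj.1
    · have h2j : 2 * j ≤ k := by omega
      have := (Nat.cast_le (α := ℝ)).2 h2j
      push_cast at this
      linarith
  -- S1 ≤ (K^2-4K+7) S0
  have hS1le : S1 ≤ (K^2 - 4*K + 7) * S0 := by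
    rw [hS1def, hS0def, Finset.mul_sum]
    apply Finset.sum_le_sum
    intro j hj
    obtain ⟨hj1, hj2⟩ := hjfacts j hj
    have haj := ha (2 * j)
    nlinarith [mul_nonneg (mul_nonneg (by linarith : (0:ℝ) ≤ K - 2*(j:ℝ)) (by linarith : (0:ℝ) ≤ K + 2*(j:ℝ) - 4)) haj]
  -- from h1 : ε * S1 ≥ 4K - 12 - ε (K-1)
  have hεS1 : ε * S1 ≥ 4*K - 12 - ε*(K-1) := by
    have h1' := mul_le_mul_of_nonneg_left h1 hε0.le
    have heq : ε * ((4*K - 12) / ε - (K - 1)) = 4*K - 12 - ε*(K-1) := by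
      field_simp
    linarith [h1', heq.symm.le, heq.le]
  -- S0 > 0
  have hS0pos : 0 < S0 := by
    have h7 : 0 < K^2 - 4*K + 7 := by nlinarith
    have hek : ε * (K-1) ≤ K - 1 := mul_le_of_le_one_left (by linarith) hε1
    have hS1pos : 0 < S1 := by
      by_contra h
      push_neg at h
      have : ε * S1 ≤ 0 := mul_nonpos_of_nonneg_of_nonpos hε0.le h
      linarith
    by_contra h
    push_neg at h
    have : (K^2 - 4*K + 7) * S0 ≤ 0 := mul_nonpos_of_nonneg_of_nonpos h7.le h
    linarith
  -- key sum inequality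
  have hkey : 0 ≤ (ε + (K-3)^2) * S0 - (K - 3 - ε*(K-1)/4) * S2 - (ε/4) * S1 := by
    have : (ε + (K-3)^2) * S0 - (K - 3 - ε*(K-1)/4) * S2 - (ε/4) * S1 =
        ∑ j ∈ Finset.Icc 2 (k / 2),
          ((ε + (K-3)^2) - (K - 3 - ε*(K-1)/4) * (2*(j:ℝ)-3) - (ε/4) * (4*(j:ℝ)^2 - 8*(j:ℝ) + 7)) * a (2*j) := by
      rw [hS0def, hS1def, hS2def, Finset.mul_sum, Finset.mul_sum, Finset.mul_sum,
        ← Finset.sum_sub_distrib, ← Finset.sum_sub_distrib]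
      apply Finset.sum_congr rfl
      intro j _; ring
    rw [this]
    apply Finset.sum_nonneg
    intro j hj
    obtain ⟨hj1, hj2⟩ := hjfacts j hj
    have haj := ha (2 * j)
    have hf : 0 ≤ (ε + (K-3)^2) - (K - 3 - ε*(K-1)/4) * (2*(j:ℝ)-3) - (ε/4) * (4*(j:ℝ)^2 - 8*(j:ℝ) + 7) := by
      nlinarith [mul_nonneg (by linarith : (0:ℝ) ≤ K - 3) (by linarith : (0:ℝ) ≤ K - 2*(j:ℝ)),
        mul_nonneg (mul_nonneg hε0.le (by linarith : (0:ℝ) ≤ K - 2*(j:ℝ))) (by linarith : (0:ℝ) ≤ 2*(j:ℝ) - 3)]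
    exact mul_nonneg hf haj
  -- denominator positive
  have hD : 0 < (K - 1) * (x + w) + (K / 2 + 2) * v + 2 * y + 2 * S0 := by
    nlinarith [mul_nonneg (by linarith : (0:ℝ) ≤ K - 1) (add_nonneg hx hw),
      mul_nonneg (by linarith : (0:ℝ) ≤ K/2 + 2) hv]
  refine ⟨hD, ?_⟩
  have hQ : (0:ℝ) < K^2 - 4*K + 7 := by nlinarith
  rw [ge_iff_le, div_le_div_iff₀ hQ hD]
  have hek : ε * (K-1) ≤ K - 1 := mul_le_of_le_one_left (by linarith) hε1
  have hc : (0:ℝ) ≤ K - 3 - ε*(K-1)/4 := by linarith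
  have t1 : 0 ≤ (K - 3 - ε*(K-1)/4) * (1 + S2 - (2*(x+w) + y + (K-4)*v)) :=
    mul_nonneg hc (by linarith)
  have t3 : 0 ≤ ((K-3)^2 + ε + (K - 3 - ε*(K-1)/4)) * y :=
    mul_nonneg (by nlinarith) hy
  have t4 : 0 ≤ ((3*K^2 - 25*K + 42)/2 + ε*(6*K - K^2)/4) * v := by
    apply mul_nonneg _ hv
    nlinarith [mul_nonneg (by linarith : (0:ℝ) ≤ K - 6) (by linarith : (0:ℝ) ≤ 5*K - 14),
      mul_nonneg (by linarith : (0:ℝ) ≤ 1 - ε) (by nlinarith : (0:ℝ) ≤ K^2 - 6*K)]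
  nlinarith [t1, t3, t4, hεS1, hkey]
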